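/- Let p be a prime and r = p^t with t ≥ 1 an integer. If α is a nonzero element of the field F_p((T^{-1})) whose integral part has positive degree and which satisfies α^{r+1} - T·α^r + T·α = 0, then 1/α = Σ_{n≥0} T^{-r^n}; in particular, 1/α satisfies the equation β = 1/T + β^r. -/

import Mathlib

open PowerSeries

noncomputable instance instCharPPS (p : ℕ) [Fact p.Prime] : CharP (PowerSeries (ZMod p)) p :=
  charP_of_injective_ringHom (PowerSeries.C_injective) p

lemma coeff_pow_p (p : ℕ) [Fact p.Prime] (f : PowerSeries (ZMod p)) (n : ℕ) :
    PowerSeries.coeff (R := ZMod p) n (f ^ p) =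
      if p ∣ n then PowerSeries.coeff (R := ZMod p) (n / p) f else 0 := by
  have hp : 0 < p := (Fact.out : p.Prime).pos
  set g : Polynomial (ZMod p) := trunc (n + 1) f with hg
  have hdvd : (X : PowerSeries (ZMod p)) ^ (n + 1) ∣ f - ↑g :=
    X_pow_dvd_iff.2 (fun m hm => by
      simp [hg, Polynomial.coeff_coe, coeff_trunc, hm])
  obtain ⟨h, hh⟩ := hdvd
  have hf : f = (↑g : PowerSeries (ZMod p)) + X ^ (n + 1) * h := by rw [← hh]; ring
  have hfp : f ^ p = (↑g : PowerSeries (ZMod p)) ^ p + (X ^ (n+1) * h) ^ p := by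
    rw [hf, add_pow_char]
  have hgp : (g : Polynomial (ZMod p)) ^ p = Polynomial.expand (ZMod p) p g := by
    rw [← Polynomial.map_frobenius_expand, ZMod.frobenius_zmod, Polynomial.map_id]
  rw [hfp, map_add, ← Polynomial.coe_pow, hgp, mul_pow, ← pow_mul,
    PowerSeries.coeff_X_pow_mul', if_neg (by nlinarith), add_zero,
    Polynomial.coeff_coe, Polynomial.coeff_expand hp]
  split
  · next hdv =>
    rw [hg, coeff_trunc, if_pos (Nat.lt_succ_of_le (Nat.div_le_self n p))]
  · rfl

open Classical in
lemma mk_pow_p_pow (p : ℕ) [Fact p.Prime] (r : ℕ) (j : ℕ) :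
    (PowerSeries.mk fun k => if ∃ n : ℕ, k = r ^ n then (1 : ZMod p) else 0) ^ p ^ j
      = PowerSeries.mk fun k => if ∃ n : ℕ, k = p ^ j * r ^ n then (1 : ZMod p) else 0 := by
  induction j with
  | zero => simp
  | succ j ih =>
    rw [pow_succ, pow_mul, ih]
    ext k
    rw [coeff_pow_p, coeff_mk]
    by_cases hdv : p ∣ k
    · rw [if_pos hdv, coeff_mk]
      congr 1
      simp only [eq_iff_iff]
      constructor
      · rintro ⟨n, hn⟩
        exact ⟨n, by rw [← Nat.div_mul_cancel hdv, hn]; ring⟩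
      · rintro ⟨n, hn⟩
        exact ⟨n, by rw [hn, mul_comm (p^j) p, mul_assoc,
          Nat.mul_div_cancel_left _ (Fact.out : p.Prime).pos]⟩
    · rw [if_neg hdv, eq_comm, coeff_mk, if_neg]
      rintro ⟨n, rfl⟩
      exact hdv (Dvd.dvd.mul_right (dvd_pow_self p (Nat.succ_ne_zero j)) _)

/-- The Laurent series `Θ₂ = Σ_{n ≥ 0} T^{-r^n}` in `F_p((T⁻¹))`, realized as
`LaurentSeries (ZMod p)` in the variable `X = 1/T` (so `T^{-r^n} = X^{r^n}`). -/
noncomputable def theta2 (p r : ℕ) : LaurentSeries (ZMod p) :=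
  open Classical in
  ((PowerSeries.mk fun k => if ∃ n : ℕ, k = r ^ n then 1 else 0 : PowerSeries (ZMod p)) :
    LaurentSeries (ZMod p))

open Classical in
lemma theta2_eq (p : ℕ) [Fact p.Prime] (t : ℕ) (ht : 1 ≤ t) :
    theta2 p (p ^ t) = HahnSeries.single (1 : ℤ) 1 + theta2 p (p ^ t) ^ p ^ t := by
  have hr2 : 2 ≤ p ^ t := Nat.one_lt_pow (by omega) (Fact.out : p.Prime).one_lt
  set f : PowerSeries (ZMod p) :=
    PowerSeries.mk fun k => if ∃ n : ℕ, k = (p ^ t) ^ n then (1 : ZMod p) else 0 with hf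
  have hsum : f = X + f ^ p ^ t := by
    rw [hf, mk_pow_p_pow]
    ext k
    rw [map_add, coeff_mk, coeff_mk, coeff_X]
    by_cases hk : k = 1
    · subst hk
      rw [if_pos ⟨0, (pow_zero _).symm⟩, if_pos rfl, if_neg, add_zero]
      rintro ⟨n, hn⟩
      have h1 : 1 ≤ (p ^ t) ^ n := Nat.one_le_pow _ _ (by omega)
      nlinarith
    · rw [if_neg hk, zero_add]
      congr 1
      simp only [eq_iff_iff]
      constructor
      · rintro ⟨n, hn⟩
        match n with
        | 0 => exact absurd (by simpa using hn) hk
        | m + 1 => exact ⟨m, by rw [hn, pow_succ, mul_comm]⟩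
      · rintro ⟨n, hn⟩
        exact ⟨n + 1, by rw [hn, pow_succ, mul_comm]⟩
  show (f : LaurentSeries (ZMod p)) = _
  conv_lhs => rw [hsum]
  rw [map_add, map_pow, HahnSeries.ofPowerSeries_X]
  rfl


/-- If `α ∈ F_p((T⁻¹))` is nonzero, its integral part has positive degree
(in the variable `X = 1/T` this reads `α.order < 0`), and
`α^{r+1} - T·α^r + T·α = 0` (with `T = HahnSeries.single (-1) 1` and `r = p^t`, `t ≥ 1`),
then `1/α = Σ_{n ≥ 0} T^{-r^n}`; in particular `β = 1/α` satisfies `β = 1/T + β^r`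
(with `1/T = HahnSeries.single 1 1`). -/
theorem stmt9 (p : ℕ) [Fact p.Prime] (t : ℕ) (ht : 1 ≤ t)
    (α : LaurentSeries (ZMod p)) (hα : α ≠ 0) (hord : α.order < 0)
    (heq : α ^ (p ^ t + 1) - HahnSeries.single (-1 : ℤ) 1 * α ^ p ^ t
        + HahnSeries.single (-1 : ℤ) 1 * α = 0) :
    α⁻¹ = theta2 p (p ^ t) ∧
    α⁻¹ = HahnSeries.single (1 : ℤ) 1 + α⁻¹ ^ p ^ t := by
  classical
  haveI : CharP (LaurentSeries (ZMod p)) p :=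
    charP_of_injective_ringHom (HahnSeries.C_injective (Γ := ℤ) (R := ZMod p)) p
  have hp2 : 2 ≤ p := (Fact.out : p.Prime).two_le
  have hr2 : 2 ≤ p ^ t := Nat.one_lt_pow (by omega) (by omega)
  have hXT : (HahnSeries.single (-1 : ℤ) 1 : LaurentSeries (ZMod p)) *
      HahnSeries.single (1 : ℤ) 1 = 1 := by
    rw [HahnSeries.single_mul_single]
    norm_num [HahnSeries.single_zero_one]
  have h1 : α ^ p ^ t = HahnSeries.single (1 : ℤ) 1 * α ^ (p ^ t + 1) + α := by
    linear_combination (-(HahnSeries.single (1 : ℤ) 1 : LaurentSeries (ZMod p))) * heq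
      + (α - α ^ p ^ t) * hXT
  have hinv : α * α⁻¹ = 1 := mul_inv_cancel₀ hα
  have hβ : α⁻¹ = HahnSeries.single (1 : ℤ) 1 + α⁻¹ ^ p ^ t := by
    have hpow : α ^ p ^ t * α⁻¹ ^ p ^ t = 1 := by rw [← mul_pow, hinv, one_pow]
    have hpow1 : α ^ (p ^ t + 1) * α⁻¹ ^ p ^ t * α⁻¹ = 1 := by
      rw [mul_assoc, ← pow_succ, ← mul_pow, hinv, one_pow]
    calc α⁻¹ = α⁻¹ * (α ^ p ^ t * α⁻¹ ^ p ^ t) := by rw [hpow, mul_one]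
      _ = HahnSeries.single (1 : ℤ) 1 * (α ^ (p ^ t + 1) * α⁻¹ ^ p ^ t * α⁻¹)
          + (α * α⁻¹) * α⁻¹ ^ p ^ t := by rw [h1]; ring
      _ = HahnSeries.single (1 : ℤ) 1 + α⁻¹ ^ p ^ t := by
          rw [hinv, hpow1, mul_one, one_mul]
  refine ⟨?_, hβ⟩
  have hθeq := theta2_eq p t ht
  set θ := theta2 p (p ^ t) with hθdef
  have hcoeff : ∀ i : ℤ, θ.coeff i =
      if i < 0 then 0 else (if ∃ n : ℕ, i.natAbs = (p ^ t) ^ n then (1 : ZMod p) else 0) := by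
    intro i
    rw [hθdef, theta2, PowerSeries.coeff_coe, PowerSeries.coeff_mk]
  have hθne : θ ≠ 0 := by
    intro h
    have h1' := hcoeff 1
    rw [h, HahnSeries.coeff_zero, if_neg (by norm_num),
      if_pos ⟨0, by simp⟩] at h1'
    exact one_ne_zero h1'.symm
  have hθord : 0 < θ.order := by
    by_contra h
    push_neg at h
    have hne := HahnSeries.coeff_order_eq_zero.not.mpr hθne
    rw [hcoeff] at hne
    rcases h.lt_or_eq with h' | h'
    · exact hne (if_pos h')
    · rw [h'] at hne
      apply hne
      rw [if_neg (lt_irrefl 0), if_neg]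
      rintro ⟨n, hn⟩
      simp only [Int.natAbs_zero] at hn
      have := Nat.one_le_pow n (p ^ t) (by omega)
      omega
  have hinvne : α⁻¹ ≠ 0 := inv_ne_zero hα
  have hβord : 0 < (α⁻¹).order := by
    have ho := HahnSeries.order_mul hα hinvne
    rw [hinv, HahnSeries.order_one] at ho
    omega
  have hδ0 : α⁻¹ - θ = 0 := by
    by_contra hδ
    have hδr : (α⁻¹ - θ) ^ p ^ t = α⁻¹ - θ := by
      rw [sub_pow_char_pow]
      have e1 : α⁻¹ ^ p ^ t = α⁻¹ - HahnSeries.single (1 : ℤ) 1 := by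
        linear_combination -hβ
      have e2 : θ ^ p ^ t = θ - HahnSeries.single (1 : ℤ) 1 := by
        linear_combination -hθeq
      rw [e1, e2]; ring
    have hδord : 0 < (α⁻¹ - θ).order := by
      have := HahnSeries.min_order_le_order_add (x := α⁻¹) (y := -θ)
        (by rw [← sub_eq_add_neg]; exact hδ)
      rw [← sub_eq_add_neg, HahnSeries.order_neg] at this
      have hmin : 0 < min (α⁻¹).order θ.order := lt_min hβord hθord
      omega
    have hpow := HahnSeries.order_pow (α⁻¹ - θ) (p ^ t)
    rw [hδr, nsmul_eq_mul] at hpow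
    have h2 : (2 : ℤ) ≤ (p ^ t : ℕ) := by exact_mod_cast hr2
    nlinarith [hpow, hδord, h2]
  exact sub_eq_zero.mp hδ0
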